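/- Assume μ ≥ α(1) and μ > r. Then there exists b* ∈ (1, μ/r) such that the solution w_{b*} of the Cauchy problem r w = (μ - α((1-x)^+))w' + (σ²/2)w'' with w'(b*) = 1 and w''(b*) = 0 satisfies w_{b*}(0) = 0. -/

import Mathlib

set_option maxHeartbeats 1000000

open Set Filter Metric Real

noncomputable section

private def clampTo (ρ s : ℝ) : ℝ := max (-ρ) (min ρ s)

private lemma clampTo_abs_le {ρ : ℝ} (hρ : 0 ≤ ρ) (s : ℝ) : |clampTo ρ s| ≤ ρ := by
  simp only [clampTo, max_def, min_def]
  split_ifs <;> rw [abs_le] <;> constructor <;> linarith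

private lemma clampTo_le_abs {ρ : ℝ} (hρ : 0 ≤ ρ) (s : ℝ) : |clampTo ρ s| ≤ |s| := by
  simp only [clampTo, max_def, min_def]
  split_ifs <;> rw [abs_le] <;>
    constructor <;> linarith [le_abs_self s, neg_abs_le s]

private lemma clampTo_lip (ρ s t : ℝ) : |clampTo ρ s - clampTo ρ t| ≤ |s - t| := by
  simp only [clampTo, max_def, min_def]
  split_ifs <;> rw [abs_le] <;>
    constructor <;> linarith [le_abs_self (s - t), neg_abs_le (s - t)]

private lemma clampTo_eq {ρ s : ℝ} (h : |s| ≤ ρ) : clampTo ρ s = s := by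
  rw [abs_le] at h
  simp only [clampTo, max_def, min_def]
  split_ifs <;> linarith

private lemma exists_ode_solution (c : ℝ → ℝ) (hc : Continuous c) (σ r a₀ a₁ : ℝ)
    (hσ : 0 < σ) (ha₀ : a₀ < 0) (ha₁ : 0 < a₁) :
    ∃ y u : ℝ → ℝ, y 0 = 0 ∧ u 0 = 1 ∧
      ∀ x ∈ Ioo a₀ a₁, HasDerivAt y (u x) x ∧
        HasDerivAt u (2 / σ ^ 2 * (r * y x - c x * u x)) x := by
  have hs2 : 0 < 2 / σ ^ 2 := by positivity
  obtain ⟨Cc0, hCc0⟩ :=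
    (isCompact_Icc (a := a₀) (b := a₁)).exists_bound_of_continuousOn hc.continuousOn
  set Cc := max Cc0 0 with hCcdef
  have hCc : ∀ t ∈ Icc a₀ a₁, |c t| ≤ Cc := fun t ht => by
    have := hCc0 t ht; rw [Real.norm_eq_abs] at this; exact this.trans (le_max_left _ _)
  have hCc0' : (0:ℝ) ≤ Cc := le_max_right _ _
  set M := max 1 (2 / σ ^ 2 * (|r| + Cc)) with hMdef
  have hM1 : (1:ℝ) ≤ M := le_max_left _ _
  have hM2 : 2 / σ ^ 2 * (|r| + Cc) ≤ M := le_max_right _ _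
  have hM0 : (0:ℝ) ≤ M := zero_le_one.trans hM1
  set ρ := Real.exp (M * (a₁ - a₀)) with hρdef
  have hρ0 : (0:ℝ) < ρ := Real.exp_pos _
  set P : ℝ × ℝ → ℝ × ℝ := fun z => (clampTo ρ z.1, clampTo ρ z.2) with hPdef
  set v : ℝ → ℝ × ℝ → ℝ × ℝ :=
    fun t z => ((P z).2, 2 / σ ^ 2 * (r * (P z).1 - c t * (P z).2)) with hvdef
  have hPρ : ∀ z, ‖P z‖ ≤ ρ := fun z => by
    rw [Prod.norm_def]
    exact max_le (clampTo_abs_le hρ0.le _) (clampTo_abs_le hρ0.le _)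
  have hPz : ∀ z, ‖P z‖ ≤ ‖z‖ := fun z => by
    rw [Prod.norm_def, Prod.norm_def]
    exact max_le_max (clampTo_le_abs hρ0.le _) (clampTo_le_abs hρ0.le _)
  have hkey : ∀ t ∈ Icc a₀ a₁, ∀ z, ‖v t z‖ ≤ M * ‖P z‖ := by
    intro t ht z
    have h1 : |(P z).1| ≤ ‖P z‖ := by rw [← Real.norm_eq_abs]; exact norm_fst_le _
    have h2 : |(P z).2| ≤ ‖P z‖ := by rw [← Real.norm_eq_abs]; exact norm_snd_le _
    have hPn : (0:ℝ) ≤ ‖P z‖ := norm_nonneg _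
    rw [Prod.norm_def, Real.norm_eq_abs, Real.norm_eq_abs]
    apply max_le
    · nlinarith [mul_le_mul_of_nonneg_right hM1 hPn]
    · have : |2 / σ ^ 2 * (r * (P z).1 - c t * (P z).2)| ≤
          2 / σ ^ 2 * (|r| * |(P z).1| + |c t| * |(P z).2|) := by
        rw [abs_mul, abs_of_pos hs2]
        refine mul_le_mul_of_nonneg_left ?_ hs2.le
        calc |r * (P z).1 - c t * (P z).2| ≤ |r * (P z).1| + |c t * (P z).2| := abs_sub _ _
          _ = |r| * |(P z).1| + |c t| * |(P z).2| := by rw [abs_mul, abs_mul]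
      refine this.trans ?_
      have hct := hCc t ht
      have hrabs : (0:ℝ) ≤ |r| := abs_nonneg r
      have hcn : (0:ℝ) ≤ |c t| := abs_nonneg _
      have q1 : |r| * |(P z).1| ≤ |r| * ‖P z‖ := mul_le_mul_of_nonneg_left h1 hrabs
      have q2 : |c t| * |(P z).2| ≤ Cc * ‖P z‖ := mul_le_mul hct h2 (abs_nonneg _) hCc0'
      have q3 : 2 / σ ^ 2 * (|r| * |(P z).1| + |c t| * |(P z).2|) ≤
          2 / σ ^ 2 * ((|r| + Cc) * ‖P z‖) :=
        mul_le_mul_of_nonneg_left (by nlinarith) hs2.le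
      have q4 : 2 / σ ^ 2 * ((|r| + Cc) * ‖P z‖) = (2 / σ ^ 2 * (|r| + Cc)) * ‖P z‖ := by ring
      nlinarith [mul_le_mul_of_nonneg_right hM2 hPn]
  set L : NNReal := M.toNNReal with hLdef
  set x₀ : ℝ × ℝ := (0, 1) with hx₀def
  set R : ℝ := M * ρ * max a₁ (-a₀) with hRdef
  have hmax0 : (0:ℝ) ≤ max a₁ (-a₀) := le_trans ha₁.le (le_max_left _ _)
  have hpl : IsPicardLindelof v (tmin := a₀) (tmax := a₁) ⟨0, ⟨ha₀.le, ha₁.le⟩⟩ x₀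
      R.toNNReal 0 (M * ρ).toNNReal L :=
    { lipschitzOnWith := by
        intro t ht
        apply LipschitzOnWith.of_dist_le_mul
        intro z _ w _
        rw [Prod.dist_eq, Real.dist_eq, Real.dist_eq, Prod.dist_eq, Real.dist_eq, Real.dist_eq]
        have e1 : |clampTo ρ z.1 - clampTo ρ w.1| ≤ |z.1 - w.1| := clampTo_lip _ _ _
        have e2 : |clampTo ρ z.2 - clampTo ρ w.2| ≤ |z.2 - w.2| := clampTo_lip _ _ _
        have hd : (0:ℝ) ≤ max |z.1 - w.1| |z.2 - w.2| :=
          le_trans (abs_nonneg _) (le_max_left _ _)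
        have hL : (L : ℝ) = M := Real.coe_toNNReal _ hM0
        rw [hL]
        apply max_le
        · simp only [hvdef, hPdef]
          calc |clampTo ρ z.2 - clampTo ρ w.2| ≤ |z.2 - w.2| := e2
            _ ≤ max |z.1 - w.1| |z.2 - w.2| := le_max_right _ _
            _ ≤ M * max |z.1 - w.1| |z.2 - w.2| := le_mul_of_one_le_left hd hM1
        · simp only [hvdef, hPdef]
          have : 2 / σ ^ 2 * (r * clampTo ρ z.1 - c t * clampTo ρ z.2) -
              2 / σ ^ 2 * (r * clampTo ρ w.1 - c t * clampTo ρ w.2) =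
              2 / σ ^ 2 * (r * (clampTo ρ z.1 - clampTo ρ w.1)
                - c t * (clampTo ρ z.2 - clampTo ρ w.2)) := by ring
          rw [this]
          have hct := hCc t ht
          calc |2 / σ ^ 2 * (r * (clampTo ρ z.1 - clampTo ρ w.1)
                - c t * (clampTo ρ z.2 - clampTo ρ w.2))|
              ≤ 2 / σ ^ 2 * (|r| * |clampTo ρ z.1 - clampTo ρ w.1|
                + |c t| * |clampTo ρ z.2 - clampTo ρ w.2|) := by
                rw [abs_mul, abs_of_pos hs2]
                refine mul_le_mul_of_nonneg_left ?_ hs2.le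
                calc |r * (clampTo ρ z.1 - clampTo ρ w.1) - c t * (clampTo ρ z.2 - clampTo ρ w.2)|
                    ≤ |r * (clampTo ρ z.1 - clampTo ρ w.1)| + |c t * (clampTo ρ z.2 - clampTo ρ w.2)| :=
                      abs_sub _ _
                  _ = |r| * |clampTo ρ z.1 - clampTo ρ w.1| + |c t| * |clampTo ρ z.2 - clampTo ρ w.2| := by
                      rw [abs_mul, abs_mul]
            _ ≤ M * max |z.1 - w.1| |z.2 - w.2| := by
                have b1 : |clampTo ρ z.1 - clampTo ρ w.1| ≤ max |z.1 - w.1| |z.2 - w.2| :=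
                  e1.trans (le_max_left _ _)
                have b2 : |clampTo ρ z.2 - clampTo ρ w.2| ≤ max |z.1 - w.1| |z.2 - w.2| :=
                  e2.trans (le_max_right _ _)
                have hr0 : (0:ℝ) ≤ |r| := abs_nonneg _
                have hc0 : (0:ℝ) ≤ |c t| := abs_nonneg _
                have hd : (0:ℝ) ≤ max |z.1 - w.1| |z.2 - w.2| :=
                  le_trans (abs_nonneg _) (le_max_left _ _)
                have q1 : |r| * |clampTo ρ z.1 - clampTo ρ w.1| ≤
                    |r| * max |z.1 - w.1| |z.2 - w.2| := mul_le_mul_of_nonneg_left b1 hr0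
                have q2 : |c t| * |clampTo ρ z.2 - clampTo ρ w.2| ≤
                    Cc * max |z.1 - w.1| |z.2 - w.2| :=
                  mul_le_mul hct b2 (abs_nonneg _) hCc0'
                have q3 : 2 / σ ^ 2 * (|r| * |clampTo ρ z.1 - clampTo ρ w.1|
                    + |c t| * |clampTo ρ z.2 - clampTo ρ w.2|) ≤
                    2 / σ ^ 2 * ((|r| + Cc) * max |z.1 - w.1| |z.2 - w.2|) :=
                  mul_le_mul_of_nonneg_left (by nlinarith) hs2.le
                have q4 : 2 / σ ^ 2 * ((|r| + Cc) * max |z.1 - w.1| |z.2 - w.2|) =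
                    (2 / σ ^ 2 * (|r| + Cc)) * max |z.1 - w.1| |z.2 - w.2| := by ring
                nlinarith [mul_le_mul_of_nonneg_right hM2 hd]
      continuousOn := by
        intro x _
        exact (Continuous.continuousOn (by fun_prop))
      norm_le := fun t ht x _ => by
        rw [Real.coe_toNNReal _ (by positivity)]
        exact (hkey t ht x).trans (mul_le_mul_of_nonneg_left (hPρ x) hM0)
      mul_max_le := by
        simp only [NNReal.coe_zero, sub_zero, zero_sub, Real.coe_toNNReal _ (by positivity : (0:ℝ) ≤ R),
          Real.coe_toNNReal _ (by positivity : (0:ℝ) ≤ M * ρ)]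
        exact le_rfl }
  obtain ⟨f, hf0', hf⟩ := hpl.exists_eq_forall_mem_Icc_hasDerivWithinAt₀
  have hf0 : f 0 = x₀ := hf0'
  have hfc : ContinuousOn f (Icc a₀ a₁) := fun t ht => (hf t ht).continuousWithinAt
  have hx₀n : ‖x₀‖ = 1 := by
    rw [hx₀def, Prod.norm_def]; simp
  -- forward bound
  have hfwd : ∀ t ∈ Icc 0 a₁, ‖f t‖ ≤ ρ := by
    have hg := norm_le_gronwallBound_of_norm_deriv_right_le (f := f)
      (f' := fun t => v t (f t)) (δ := 1) (K := M) (ε := 0) (a := 0) (b := a₁)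
      (hfc.mono (Icc_subset_Icc ha₀.le le_rfl))
      (fun x hx => by
        have h1 := (hf x ⟨ha₀.le.trans hx.1, hx.2.le⟩).mono
          (Icc_subset_Icc (ha₀.le.trans hx.1) le_rfl)
        exact h1.mono_of_mem_nhdsWithin (Icc_mem_nhdsGE hx.2))
      (by rw [hf0, hx₀n])
      (fun x hx => by
        have := (hkey x ⟨ha₀.le.trans hx.1, hx.2.le⟩ (f x)).trans
          (mul_le_mul_of_nonneg_left (hPz (f x)) hM0)
        linarith)
    intro t ht
    have := hg t ht
    rw [gronwallBound_ε0, one_mul] at this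
    refine this.trans ?_
    rw [hρdef]
    exact Real.exp_le_exp.2 (mul_le_mul_of_nonneg_left (by linarith [ht.2]) hM0)
  -- backward bound
  have hbwd : ∀ s ∈ Icc 0 (-a₀), ‖f (-s)‖ ≤ ρ := by
    have hmaps : MapsTo (fun x : ℝ => -x) (Icc 0 (-a₀)) (Icc a₀ a₁) := by
      intro x hx; constructor <;> simp at hx ⊢ <;> linarith [hx.1, hx.2]
    have hg := norm_le_gronwallBound_of_norm_deriv_right_le (f := fun s => f (-s))
      (f' := fun s => -(v (-s) (f (-s)))) (δ := 1) (K := M) (ε := 0) (a := 0) (b := -a₀)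
      (hfc.comp continuous_neg.continuousOn hmaps)
      (fun s hs => by
        have hmem : -s ∈ Icc a₀ a₁ := ⟨by linarith [hs.2], by linarith [hs.1]⟩
        have h1 := hf (-s) hmem
        have h2 : HasDerivWithinAt (fun x : ℝ => -x) (-1) (Icc s (-a₀)) s :=
          (hasDerivAt_neg s).hasDerivWithinAt
        have hmaps2 : MapsTo (fun x : ℝ => -x) (Icc s (-a₀)) (Icc a₀ a₁) := by
          intro x hx; constructor <;> simp at hx ⊢ <;> linarith [hx.1, hx.2, hs.1]
        have h3 := HasDerivWithinAt.scomp s h1 h2 hmaps2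
        have h4 := h3.mono_of_mem_nhdsWithin (Icc_mem_nhdsGE hs.2)
        simpa [Function.comp_def] using h4)
      (by show ‖f (-0:ℝ)‖ ≤ 1; rw [neg_zero, hf0, hx₀n])
      (fun s hs => by
        have hmem : -s ∈ Icc a₀ a₁ := ⟨by linarith [hs.2], by linarith [hs.1]⟩
        have := (hkey (-s) hmem (f (-s))).trans
          (mul_le_mul_of_nonneg_left (hPz (f (-s))) hM0)
        rw [norm_neg]
        linarith)
    intro s hs
    have := hg s hs
    rw [gronwallBound_ε0, one_mul] at this
    refine this.trans ?_
    rw [hρdef]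
    exact Real.exp_le_exp.2 (mul_le_mul_of_nonneg_left (by linarith [hs.2]) hM0)
  have hbd : ∀ t ∈ Icc a₀ a₁, ‖f t‖ ≤ ρ := by
    intro t ht
    rcases le_total 0 t with h | h
    · exact hfwd t ⟨h, ht.2⟩
    · have := hbwd (-t) ⟨by linarith, by linarith [ht.1]⟩
      rwa [neg_neg] at this
  have hfix : ∀ t ∈ Icc a₀ a₁, P (f t) = f t := by
    intro t ht
    have h1 : |(f t).1| ≤ ρ := by
      rw [← Real.norm_eq_abs]; exact (norm_fst_le _).trans (hbd t ht)
    have h2 : |(f t).2| ≤ ρ := by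
      rw [← Real.norm_eq_abs]; exact (norm_snd_le _).trans (hbd t ht)
    rw [hPdef]
    exact Prod.ext (clampTo_eq h1) (clampTo_eq h2)
  refine ⟨fun t => (f t).1, fun t => (f t).2, by simp [hf0, hx₀def], by simp [hf0, hx₀def], ?_⟩
  intro x hx
  have hD : HasDerivAt f (v x (f x)) x :=
    (hf x (Ioo_subset_Icc_self hx)).hasDerivAt (Icc_mem_nhds hx.1 hx.2)
  have hvfix : v x (f x) = ((f x).2, 2 / σ ^ 2 * (r * (f x).1 - c x * (f x).2)) := by
    have hfx := hfix x (Ioo_subset_Icc_self hx)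
    have c1 : clampTo ρ (f x).1 = (f x).1 := congrArg Prod.fst hfx
    have c2 : clampTo ρ (f x).2 = (f x).2 := congrArg Prod.snd hfx
    rw [hvdef]
    simp only [hPdef, c1, c2]
  rw [hvfix] at hD
  constructor
  · simpa using hD.hasFDerivAt.fst.hasDerivAt
  · simpa using hD.hasFDerivAt.snd.hasDerivAt


private lemma hasDerivAt_union {F : ℝ → ℝ} {a d : ℝ}
    (h1 : HasDerivWithinAt F d (Iic a) a) (h2 : HasDerivWithinAt F d (Ici a) a) :
    HasDerivAt F d a := by
  have h := h1.union h2
  rw [Iic_union_Ici] at h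
  exact h.hasDerivAt (by simp)

private lemma continuousAt_union {F : ℝ → ℝ} {a : ℝ}
    (h1 : ContinuousWithinAt F (Iic a) a) (h2 : ContinuousWithinAt F (Ici a) a) :
    ContinuousAt F a := by
  have h := h1.union h2
  rw [Iic_union_Ici] at h
  exact (continuousWithinAt_univ F a).1 h

theorem stmt_9 (μ σ r : ℝ) (hσ : 0 < σ) (hr : 0 < r) (hμr : r < μ)
    (α : ℝ → ℝ) (hα : ContDiff ℝ 1 α) (hαconv : ConvexOn ℝ (Ici 0) α)
    (hαmono : StrictMonoOn α (Ici 0)) (hα0 : α 0 = 0)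
    (hα' : ∀ x ≥ (0:ℝ), r ≤ deriv α x) (hμα : α 1 ≤ μ) :
    ∃ b ∈ Ioo (1:ℝ) (μ / r), ∃ w : ℝ → ℝ, ContDiff ℝ 2 w ∧
      (∀ x ∈ Icc (0:ℝ) b,
        r * w x = (μ - α (max (1 - x) 0)) * deriv w x + σ ^ 2 / 2 * deriv (deriv w) x) ∧
      deriv w b = 1 ∧ deriv (deriv w) b = 0 ∧ w 0 = 0 := by
  have hσ2 : (0:ℝ) < σ ^ 2 := by positivity
  have hs2 : (0:ℝ) < 2 / σ ^ 2 := by positivity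
  set T : ℝ := μ / r with hTdef
  have hT1 : 1 < T := (one_lt_div hr).2 hμr
  have hrT : r * T = μ := by rw [hTdef]; field_simp
  set c : ℝ → ℝ := fun x => μ - α (max (1 - x) 0) with hcdef
  have hc : Continuous c := by
    apply continuous_const.sub
    exact hα.continuous.comp ((continuous_const.sub continuous_id).max continuous_const)
  obtain ⟨y, u, y0, u0, hyu⟩ :=
    exists_ode_solution c hc σ r (-1) (T + 1) hσ (by norm_num) (by linarith)
  have hmem : ∀ x : ℝ, 0 ≤ x → x ≤ T → x ∈ Ioo (-1 : ℝ) (T + 1) :=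
    fun x h1 h2 => ⟨by linarith, by linarith⟩
  set V : ℝ → ℝ := fun x => 2 / σ ^ 2 * (r * y x - c x * u x) with hVdef
  have hy : ∀ x ∈ Icc (0:ℝ) T, HasDerivAt y (u x) x :=
    fun x hx => (hyu x (hmem x hx.1 hx.2)).1
  have hu : ∀ x ∈ Icc (0:ℝ) T, HasDerivAt u (V x) x :=
    fun x hx => (hyu x (hmem x hx.1 hx.2)).2
  have hyC : ContinuousOn y (Icc 0 T) :=
    fun x hx => (hy x hx).continuousAt.continuousWithinAt
  have huC : ContinuousOn u (Icc 0 T) :=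
    fun x hx => (hu x hx).continuousAt.continuousWithinAt
  -- basic facts about c
  have hc1 : ∀ x : ℝ, 1 ≤ x → c x = μ := by
    intro x hx
    simp only [hcdef]
    rw [max_eq_right (by linarith : 1 - x ≤ 0), hα0, sub_zero]
  have hc0 : c 0 = μ - α 1 := by
    simp only [hcdef]; norm_num
  have hcderiv : ∀ x ∈ Ioo (0:ℝ) 1, HasDerivAt c (deriv α (1 - x)) x := by
    intro x hx
    have hin : HasDerivAt (fun z : ℝ => 1 - z) (-1) x := by
      simpa using (hasDerivAt_id x).const_sub 1
    have hαd : HasDerivAt α (deriv α (1 - x)) (1 - x) :=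
      ((hα.differentiable one_ne_zero) (1 - x)).hasDerivAt
    have hcomp := (hαd.comp x hin).const_sub μ
    have heq : c =ᶠ[nhds x] fun z => μ - α (1 - z) := by
      filter_upwards [Iio_mem_nhds hx.2] with z hz
      simp only [hcdef]
      rw [max_eq_left (by linarith [mem_Iio.mp hz] : (0:ℝ) ≤ 1 - z)]
    have := hcomp.congr_of_eventuallyEq heq
    refine this.congr_deriv ?_
    ring
  -- u is positive on [0, T]
  have upos : ∀ x ∈ Icc (0:ℝ) T, 0 < u x := by
    by_contra hcon
    push_neg at hcon
    obtain ⟨x₁, hx₁, hx₁u⟩ := hcon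
    set S := Icc (0:ℝ) T ∩ u ⁻¹' (Iic 0) with hSdef
    have hSne : S.Nonempty := ⟨x₁, hx₁, by simpa using hx₁u⟩
    have hSbdd : BddBelow S := ⟨0, fun z hz => hz.1.1⟩
    have hSc : IsClosed S := huC.preimage_isClosed_of_isClosed isClosed_Icc isClosed_Iic
    set x₀ := sInf S with hx₀def
    have hx₀S : x₀ ∈ S := hSc.csInf_mem hSne hSbdd
    have hux₀le : u x₀ ≤ 0 := hx₀S.2
    have hx₀0 : 0 < x₀ := by
      rcases eq_or_lt_of_le hx₀S.1.1 with h | h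
      · exfalso
        rw [← h, u0] at hux₀le
        linarith
      · exact h
    have hlt : ∀ z : ℝ, 0 ≤ z → z < x₀ → 0 < u z := by
      intro z h0 hz
      by_contra hzc
      push_neg at hzc
      have : z ∈ S := ⟨⟨h0, le_trans hz.le hx₀S.1.2⟩, by simpa using hzc⟩
      exact absurd (csInf_le hSbdd this) (by linarith)
    have hux₀ : u x₀ = 0 := by
      refine le_antisymm hux₀le ?_
      have htd : Filter.Tendsto u (nhdsWithin x₀ (Iio x₀)) (nhds (u x₀)) :=
        ((hu x₀ hx₀S.1).continuousAt.tendsto).mono_left nhdsWithin_le_nhds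
      refine ge_of_tendsto htd ?_
      filter_upwards [Ioo_mem_nhdsLT hx₀0] with z hz
      exact (hlt z hz.1.le hz.2).le
    have hymono : StrictMonoOn y (Icc 0 x₀) := by
      apply strictMonoOn_of_deriv_pos (convex_Icc _ _)
        (hyC.mono (Icc_subset_Icc le_rfl hx₀S.1.2))
      intro z hz
      rw [interior_Icc] at hz
      rw [(hy z ⟨hz.1.le, le_trans hz.2.le hx₀S.1.2⟩).deriv]
      exact hlt z hz.1.le hz.2
    have hy₀pos : 0 < y x₀ := by
      have := hymono ⟨le_rfl, hx₀0.le⟩ ⟨hx₀0.le, le_rfl⟩ hx₀0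
      rwa [y0] at this
    have hVpos : 0 < V x₀ := by
      simp only [hVdef, hux₀, mul_zero, sub_zero]
      positivity
    have hslope := (hasDerivAt_iff_tendsto_slope.1 (hu x₀ hx₀S.1)).eventually
      (eventually_gt_nhds hVpos)
    have hslope' : ∀ᶠ z in nhdsWithin x₀ (Iio x₀), 0 < slope u x₀ z :=
      hslope.filter_mono (nhdsWithin_mono x₀ fun z hz => ne_of_lt hz)
    obtain ⟨z, hz1, hz2⟩ := (hslope'.and
      (Ioo_mem_nhdsLT hx₀0 : Ioo 0 x₀ ∈ nhdsWithin x₀ (Iio x₀))).exists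
    have hzu : 0 < u z := hlt z hz2.1.le hz2.2
    rw [slope_def_field, hux₀, sub_zero] at hz1
    rcases div_pos_iff.1 hz1 with ⟨h1, h2⟩ | ⟨h1, h2⟩ <;> linarith [hz2.2]
  -- y is increasing on [0, T]
  have hymonoT : StrictMonoOn y (Icc 0 T) := by
    apply strictMonoOn_of_deriv_pos (convex_Icc _ _) hyC
    intro z hz
    rw [interior_Icc] at hz
    rw [(hy z ⟨hz.1.le, hz.2.le⟩).deriv]
    exact upos z ⟨hz.1.le, hz.2.le⟩
  -- the function ψ and the integrating factor
  set ψ : ℝ → ℝ := fun x => c x * u x - r * y x with hψdef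
  have hVψ : ∀ x, V x = -(2 / σ ^ 2) * ψ x := by
    intro x; simp only [hVdef, hψdef]; ring
  set J : ℝ → ℝ := fun x => ∫ t in (0:ℝ)..x, 2 / σ ^ 2 * c t with hJdef
  have hJd : ∀ x : ℝ, HasDerivAt J (2 / σ ^ 2 * c x) x := fun x =>
    ((continuous_const.mul hc).integral_hasStrictDerivAt 0 x).hasDerivAt
  set η : ℝ → ℝ := fun x => Real.exp (J x) * ψ x with hηdef
  have hηx : ∀ x, η x = Real.exp (J x) * ψ x := fun x => by simp only [hηdef]
  have hψd : ∀ x ∈ Ioo (0:ℝ) 1, HasDerivAt ψ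
      (deriv α (1 - x) * u x + c x * V x - r * u x) x := by
    intro x hx
    have hxT : x ∈ Icc (0:ℝ) T := ⟨hx.1.le, by linarith [hx.2]⟩
    exact ((hcderiv x hx).mul (hu x hxT)).sub ((hy x hxT).const_mul r)
  have hηd : ∀ x ∈ Ioo (0:ℝ) 1, HasDerivAt η
      (Real.exp (J x) * ((deriv α (1 - x) - r) * u x)) x := by
    intro x hx
    have hE : HasDerivAt (fun z => Real.exp (J z)) (Real.exp (J x) * (2 / σ ^ 2 * c x)) x :=
      (hJd x).exp
    have := hE.mul (hψd x hx)
    refine this.congr_deriv ?_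
    rw [hVψ x]
    ring
  have hηC : ContinuousOn η (Icc 0 1) := by
    intro x hx
    have hxT : x ∈ Icc (0:ℝ) T := ⟨hx.1, by linarith [hx.2]⟩
    have h1 : ContinuousAt (fun z => Real.exp (J z)) x :=
      Real.continuous_exp.continuousAt.comp (hJd x).continuousAt
    have h2 : ContinuousAt ψ x := by
      apply ContinuousAt.sub
      · exact hc.continuousAt.mul (hu x hxT).continuousAt
      · exact continuousAt_const.mul (hy x hxT).continuousAt
    exact (h1.mul h2).continuousWithinAt
  have hηmono : MonotoneOn η (Icc 0 1) := by
    apply monotoneOn_of_deriv_nonneg (convex_Icc _ _) hηC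
    · intro x hx
      rw [interior_Icc] at hx
      exact (hηd x hx).differentiableAt.differentiableWithinAt
    · intro x hx
      rw [interior_Icc] at hx
      rw [(hηd x hx).deriv]
      have hαd : r ≤ deriv α (1 - x) := hα' (1 - x) (by linarith [hx.2])
      have hup : 0 < u x := upos x ⟨hx.1.le, by linarith [hx.2]⟩
      exact mul_nonneg (Real.exp_pos _).le (mul_nonneg (by linarith) hup.le)
  have hJ0 : J 0 = 0 := intervalIntegral.integral_same
  have hη0 : η 0 = μ - α 1 := by
    simp only [hηdef, hψdef, hJ0, Real.exp_zero, one_mul, u0, y0, hc0]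
    ring
  have hψnn : ∀ x ∈ Icc (0:ℝ) 1, 0 ≤ ψ x := by
    intro x hx
    have h1 : η 0 ≤ η x := hηmono ⟨le_rfl, zero_le_one⟩ hx hx.1
    rw [hη0] at h1
    have h2 : (0:ℝ) ≤ η x := by linarith
    rw [hηx x] at h2
    by_contra hcc
    push_neg at hcc
    have := mul_neg_of_pos_of_neg (Real.exp_pos (J x)) hcc
    linarith
  have hψ1 : 0 < ψ 1 := by
    have hη1 : 0 < η 1 := by
      rcases eq_or_lt_of_le hμα with heq | hlt
      · -- α 1 = μ; use MVT to find a point with deriv α = μ > r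
        obtain ⟨ξ, hξ, hξd⟩ := exists_deriv_eq_slope α one_pos
          (hα.continuous.continuousOn) ((hα.differentiable one_ne_zero).differentiableOn)
        norm_num [hα0] at hξd
        rw [heq] at hξd
        set p : ℝ := 1 - ξ with hpdef
        have hp : p ∈ Ioo (0:ℝ) 1 := ⟨by linarith [hξ.2], by linarith [hξ.1]⟩
        have hup : 0 < u p := upos p ⟨hp.1.le, by linarith [hp.2]⟩
        have hdp : 0 < Real.exp (J p) * ((deriv α (1 - p) - r) * u p) := by
          have h1p : (1:ℝ) - p = ξ := by rw [hpdef]; ring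
          rw [h1p, hξd]
          exact mul_pos (Real.exp_pos _) (mul_pos (by linarith) hup)
        have hslope := (hasDerivAt_iff_tendsto_slope.1 (hηd p hp)).eventually
          (eventually_gt_nhds hdp)
        have hslope' : ∀ᶠ z in nhdsWithin p (Ioi p), 0 < slope η p z :=
          hslope.filter_mono (nhdsWithin_mono p fun z hz => ne_of_gt hz)
        obtain ⟨q, hq1, hq2⟩ := (hslope'.and
          (Ioo_mem_nhdsGT hp.2 : Ioo p 1 ∈ nhdsWithin p (Ioi p))).exists
        rw [slope_def_field] at hq1
        have hηq : η p < η q := by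
          rcases div_pos_iff.1 hq1 with ⟨h1, h2⟩ | ⟨h1, h2⟩ <;> linarith [hq2.1]
        have hη1q : η q ≤ η 1 := hηmono ⟨by linarith [hq2.1, hp.1], hq2.2.le⟩
          ⟨zero_le_one, le_rfl⟩ hq2.2.le
        have hηp0 : η 0 ≤ η p := hηmono ⟨le_rfl, zero_le_one⟩ ⟨hp.1.le, hp.2.le⟩ hp.1.le
        rw [hη0, ← heq] at hηp0
        linarith
      · have h1 : η 0 ≤ η 1 := hηmono ⟨le_rfl, zero_le_one⟩ ⟨zero_le_one, le_rfl⟩ zero_le_one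
        rw [hη0] at h1
        linarith
    rw [hηx 1] at hη1
    by_contra hcc
    push_neg at hcc
    nlinarith [mul_nonneg (Real.exp_pos (J 1)).le (neg_nonneg.2 hcc)]
  -- G and the existence of a zero of G in (1, T)
  set G : ℝ → ℝ := fun x => r * y x - μ * u x with hGdef
  have hGx : ∀ x, G x = r * y x - μ * u x := fun x => by simp only [hGdef]
  have hG1 : G 1 < 0 := by
    have h1 : ψ 1 = μ * u 1 - r * y 1 := by simp only [hψdef]; rw [hc1 1 le_rfl]
    rw [hGx 1]
    linarith [hψ1, h1 ▸ hψ1]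
  have hGC : ∀ x ∈ Icc (0:ℝ) T, ContinuousAt G x := by
    intro x hx
    exact (continuousAt_const.mul (hy x hx).continuousAt).sub
      (continuousAt_const.mul (hu x hx).continuousAt)
  have hex : ∃ t₁ ∈ Ioo (1:ℝ) T, 0 ≤ G t₁ := by
    by_contra hcon
    push_neg at hcon
    have hVG : ∀ x : ℝ, 1 ≤ x → V x = 2 / σ ^ 2 * G x := by
      intro x hx
      simp only [hVdef, hGdef]
      rw [hc1 x hx]
    have hVle : ∀ x ∈ Ioo (0:ℝ) T, deriv u x ≤ 0 := by
      intro x hx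
      rw [(hu x ⟨hx.1.le, hx.2.le⟩).deriv]
      rcases lt_or_ge x 1 with h | h
      · rw [hVψ x]
        nlinarith [mul_nonneg hs2.le (hψnn x ⟨hx.1.le, h.le⟩)]
      · rw [hVG x h]
        rcases eq_or_lt_of_le h with h1 | h1
        · rw [← h1]
          nlinarith [mul_nonneg hs2.le (neg_nonneg.2 hG1.le)]
        · nlinarith [mul_nonneg hs2.le (neg_nonneg.2 (hcon x ⟨h1, hx.2⟩).le)]
    have huanti : AntitoneOn u (Icc 0 T) := by
      apply antitoneOn_of_deriv_nonpos (convex_Icc _ _) huC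
      · intro x hx
        rw [interior_Icc] at hx
        exact (hu x ⟨hx.1.le, hx.2.le⟩).differentiableAt.differentiableWithinAt
      · intro x hx
        rw [interior_Icc] at hx
        exact hVle x hx
    have hustrict : StrictAntiOn u (Icc 1 T) := by
      apply strictAntiOn_of_deriv_neg (convex_Icc _ _)
        (huC.mono (Icc_subset_Icc (by linarith) le_rfl))
      intro x hx
      rw [interior_Icc] at hx
      rw [(hu x ⟨by linarith [hx.1], hx.2.le⟩).deriv, hVG x hx.1.le]
      nlinarith [mul_pos hs2 (neg_pos.2 (hcon x hx))]
    have hu1T : u T < u 1 := hustrict ⟨le_rfl, hT1.le⟩ ⟨hT1.le, le_rfl⟩ hT1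
    have hφ1 : StrictMonoOn (fun t => y t - u T * t) (Icc 1 T) := by
      apply strictMonoOn_of_deriv_pos (convex_Icc _ _)
      · exact ((hyC.mono (Icc_subset_Icc (by linarith) le_rfl)).sub
          (continuousOn_const.mul continuousOn_id))
      · intro x hx
        rw [interior_Icc] at hx
        have hd : HasDerivAt (fun t => y t - u T * t) (u x - u T * 1) x :=
          (hy x ⟨by linarith [hx.1], hx.2.le⟩).sub ((hasDerivAt_id x).const_mul (u T))
        rw [hd.deriv, mul_one]
        have := hustrict ⟨hx.1.le, hx.2.le⟩ ⟨hT1.le, le_rfl⟩ hx.2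
        linarith
    have k1 : y 1 - u T * 1 < y T - u T * T :=
      hφ1 ⟨le_rfl, hT1.le⟩ ⟨hT1.le, le_rfl⟩ hT1
    have hφ2 : MonotoneOn (fun t => y t - u 1 * t) (Icc 0 1) := by
      apply monotoneOn_of_deriv_nonneg (convex_Icc _ _)
      · exact ((hyC.mono (Icc_subset_Icc le_rfl hT1.le)).sub
          (continuousOn_const.mul continuousOn_id))
      · intro x hx
        rw [interior_Icc] at hx
        have hd : HasDerivAt (fun t => y t - u 1 * t) (u x - u 1 * 1) x :=
          (hy x ⟨hx.1.le, by linarith [hx.2]⟩).sub ((hasDerivAt_id x).const_mul (u 1))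
        exact hd.differentiableAt.differentiableWithinAt
      · intro x hx
        rw [interior_Icc] at hx
        have hd : HasDerivAt (fun t => y t - u 1 * t) (u x - u 1 * 1) x :=
          (hy x ⟨hx.1.le, by linarith [hx.2]⟩).sub ((hasDerivAt_id x).const_mul (u 1))
        rw [hd.deriv, mul_one]
        have := huanti ⟨hx.1.le, by linarith [hx.2]⟩ ⟨by linarith, hT1.le⟩ hx.2.le
        linarith
    have k2 : y 0 - u 1 * 0 ≤ y 1 - u 1 * 1 :=
      hφ2 ⟨le_rfl, zero_le_one⟩ ⟨zero_le_one, le_rfl⟩ zero_le_one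
    rw [y0] at k2
    have hyT : T * u T < y T := by nlinarith
    have hGT : 0 < G T := by
      rw [hGx T]
      have h2 : μ * u T = r * T * u T := by rw [← hrT]
      nlinarith [mul_lt_mul_of_pos_left hyT hr]
    have hGTle : G T ≤ 0 := by
      have htd : Filter.Tendsto G (nhdsWithin T (Iio T)) (nhds (G T)) :=
        ((hGC T ⟨by linarith, le_rfl⟩).tendsto).mono_left nhdsWithin_le_nhds
      refine le_of_tendsto htd ?_
      filter_upwards [Ioo_mem_nhdsLT hT1] with z hz
      exact (hcon z hz).le
    linarith
  obtain ⟨t₁, ht₁, hGt₁⟩ := hex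
  have hbzero : ∃ b ∈ Ioo (1:ℝ) T, G b = 0 := by
    rcases eq_or_lt_of_le hGt₁ with heq | hlt
    · exact ⟨t₁, ht₁, heq.symm⟩
    · have hGCon : ContinuousOn G (Icc 1 t₁) := fun z hz =>
        (hGC z ⟨by linarith [hz.1], le_trans hz.2 ht₁.2.le⟩).continuousWithinAt
      have h0mem : (0:ℝ) ∈ Ioo (G 1) (G t₁) := ⟨hG1, hlt⟩
      obtain ⟨b, hb, hGb⟩ := intermediate_value_Ioo ht₁.1.le hGCon h0mem
      exact ⟨b, ⟨hb.1, lt_trans hb.2 ht₁.2⟩, hGb⟩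
  obtain ⟨b, hb, hGb⟩ := hbzero
  have hb0 : (0:ℝ) < b := by linarith [hb.1]
  have hbT : b ∈ Icc (0:ℝ) T := ⟨hb0.le, hb.2.le⟩
  have hub : 0 < u b := upos b hbT
  set k : ℝ := (u b)⁻¹ with hkdef
  have hkub : k * u b = 1 := inv_mul_cancel₀ hub.ne'
  have hVb : V b = 0 := by
    simp only [hVdef]
    rw [hc1 b hb.1.le]
    rw [hGx b] at hGb
    rw [show r * y b - μ * u b = 0 from hGb, mul_zero]
  set A : ℝ := V 0 with hAdef
  set w : ℝ → ℝ := fun x =>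
    if x < 0 then k * (x + A * x ^ 2 / 2) else if x ≤ b then k * y x else k * y b + (x - b)
    with hwdef
  set w1 : ℝ → ℝ := fun x =>
    if x < 0 then k * (1 + A * x) else if x ≤ b then k * u x else 1 with hw1def
  set w2 : ℝ → ℝ := fun x =>
    if x < 0 then k * A else if x ≤ b then k * V x else 0 with hw2def
  -- region identities
  have hwneg : ∀ x : ℝ, x < 0 → w x = k * (x + A * x ^ 2 / 2) := fun x hx => by
    simp only [hwdef]; rw [if_pos hx]
  have hwmid : ∀ x ∈ Icc (0:ℝ) b, w x = k * y x := fun x hx => by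
    simp only [hwdef]; rw [if_neg (not_lt.2 hx.1), if_pos hx.2]
  have hwpos : ∀ x : ℝ, b < x → w x = k * y b + (x - b) := fun x hx => by
    simp only [hwdef]; rw [if_neg (by linarith : ¬ x < 0), if_neg (by linarith : ¬ x ≤ b)]
  have hw1neg : ∀ x : ℝ, x < 0 → w1 x = k * (1 + A * x) := fun x hx => by
    simp only [hw1def]; rw [if_pos hx]
  have hw1mid : ∀ x ∈ Icc (0:ℝ) b, w1 x = k * u x := fun x hx => by
    simp only [hw1def]; rw [if_neg (not_lt.2 hx.1), if_pos hx.2]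
  have hw1pos : ∀ x : ℝ, b < x → w1 x = 1 := fun x hx => by
    simp only [hw1def]; rw [if_neg (by linarith : ¬ x < 0), if_neg (by linarith : ¬ x ≤ b)]
  have hw2neg : ∀ x : ℝ, x < 0 → w2 x = k * A := fun x hx => by
    simp only [hw2def]; rw [if_pos hx]
  have hw2mid : ∀ x ∈ Icc (0:ℝ) b, w2 x = k * V x := fun x hx => by
    simp only [hw2def]; rw [if_neg (not_lt.2 hx.1), if_pos hx.2]
  have hw2pos : ∀ x : ℝ, b < x → w2 x = 0 := fun x hx => by
    simp only [hw2def]; rw [if_neg (by linarith : ¬ x < 0), if_neg (by linarith : ¬ x ≤ b)]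
  have hbI : ∀ x ∈ Icc (0:ℝ) b, x ∈ Icc (0:ℝ) T := fun x hx =>
    ⟨hx.1, le_trans hx.2 hb.2.le⟩
  -- set piece identities
  have hwIic : ∀ z ∈ Iic (0:ℝ), w z = k * (z + A * z ^ 2 / 2) := by
    intro z hz
    rcases lt_or_eq_of_le (mem_Iic.mp hz) with h | h
    · exact hwneg z h
    · rw [h, hwmid 0 ⟨le_rfl, hb0.le⟩, y0]; ring
  have hwIci : ∀ z ∈ Ici b, w z = k * y b + (z - b) := by
    intro z hz
    rcases eq_or_lt_of_le (mem_Ici.mp hz) with h | h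
    · rw [← h, hwmid b ⟨hb0.le, le_rfl⟩]; ring
    · exact hwpos z h
  have hw1Iic : ∀ z ∈ Iic (0:ℝ), w1 z = k * (1 + A * z) := by
    intro z hz
    rcases lt_or_eq_of_le (mem_Iic.mp hz) with h | h
    · exact hw1neg z h
    · rw [h, hw1mid 0 ⟨le_rfl, hb0.le⟩, u0]; ring
  have hw1Ici : ∀ z ∈ Ici b, w1 z = 1 := by
    intro z hz
    rcases eq_or_lt_of_le (mem_Ici.mp hz) with h | h
    · rw [← h, hw1mid b ⟨hb0.le, le_rfl⟩, hkub]
    · exact hw1pos z h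
  have hw2Iic : ∀ z ∈ Iic (0:ℝ), w2 z = k * A := by
    intro z hz
    rcases lt_or_eq_of_le (mem_Iic.mp hz) with h | h
    · exact hw2neg z h
    · rw [h, hw2mid 0 ⟨le_rfl, hb0.le⟩, hAdef]
  have hw2Ici : ∀ z ∈ Ici b, w2 z = 0 := by
    intro z hz
    rcases eq_or_lt_of_le (mem_Ici.mp hz) with h | h
    · rw [← h, hw2mid b ⟨hb0.le, le_rfl⟩, hVb, mul_zero]
    · exact hw2pos z h
  -- derivative of the polynomial piece
  have hpoly : ∀ x : ℝ, HasDerivAt (fun z => k * (z + A * z ^ 2 / 2)) (k * (1 + A * x)) x := by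
    intro x
    have h1 : HasDerivAt (fun z : ℝ => z + A * z ^ 2 / 2) (1 + A * x) x := by
      have h2 : HasDerivAt (fun z : ℝ => A * z ^ 2 / 2) (A * x) x := by
        have h := (hasDerivAt_pow 2 x).const_mul (A / 2)
        have e1 : (fun z : ℝ => A / 2 * z ^ 2) = fun z : ℝ => A * z ^ 2 / 2 := by
          funext z; ring
        rw [e1] at h
        refine h.congr_deriv ?_
        push_cast
        ring
      exact (hasDerivAt_id' x).add h2
    exact h1.const_mul k
  have hlinc : ∀ z : ℝ, HasDerivAt (fun t => k * (1 + A * t)) (k * A) z := by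
    intro z
    have h : HasDerivAt (fun t : ℝ => 1 + A * t) A z := by
      simpa using ((hasDerivAt_id z).const_mul A).const_add 1
    exact h.const_mul k
  have hlin : ∀ x : ℝ, HasDerivAt (fun z : ℝ => k * y b + (z - b)) 1 x := by
    intro x
    have h : HasDerivAt (fun z : ℝ => z - b) 1 x := (hasDerivAt_id x).sub_const b
    simpa using h.const_add (k * y b)
  -- HasDerivAt w (w1 x) x for all x
  have hww1 : ∀ x : ℝ, HasDerivAt w (w1 x) x := by
    intro x
    rcases lt_trichotomy x 0 with hx | hx | hx
    · rw [hw1neg x hx]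
      apply (hpoly x).congr_of_eventuallyEq
      filter_upwards [Iio_mem_nhds hx] with z hz
      exact hwneg z hz
    · subst hx
      rw [show w1 0 = k by rw [hw1mid 0 ⟨le_rfl, hb0.le⟩, u0, mul_one]]
      apply hasDerivAt_union
      · have h1 : HasDerivWithinAt w (k * (1 + A * 0)) (Iic 0) 0 :=
          ((hpoly 0).hasDerivWithinAt).congr hwIic (hwIic 0 self_mem_Iic)
        simpa using h1
      · have h1 : HasDerivAt (fun z => k * y z) (k * u 0) 0 :=
          (hy 0 ⟨le_rfl, by linarith⟩).const_mul k
        have h3 : HasDerivWithinAt w (k * u 0) (Icc 0 b) 0 :=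
          h1.hasDerivWithinAt.congr (fun z hz => hwmid z hz) (hwmid 0 ⟨le_rfl, hb0.le⟩)
        have h4 := h3.mono_of_mem_nhdsWithin (Icc_mem_nhdsGE hb0)
        rw [u0, mul_one] at h4
        exact h4
    · rcases lt_trichotomy x b with hxb | hxb | hxb
      · rw [hw1mid x ⟨hx.le, hxb.le⟩]
        have h1 : HasDerivAt (fun z => k * y z) (k * u x) x :=
          (hy x (hbI x ⟨hx.le, hxb.le⟩)).const_mul k
        apply h1.congr_of_eventuallyEq
        filter_upwards [Ioo_mem_nhds hx hxb] with z hz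
        exact hwmid z ⟨hz.1.le, hz.2.le⟩
      · subst hxb
        rw [hw1Ici x self_mem_Ici]
        apply hasDerivAt_union
        · have h1 : HasDerivAt (fun z => k * y z) (k * u x) x :=
            (hy x (hbI x ⟨hx.le, le_rfl⟩)).const_mul k
          have h2 : HasDerivWithinAt w (k * u x) (Icc 0 x) x :=
            h1.hasDerivWithinAt.congr (fun z hz => hwmid z hz) (hwmid x ⟨hx.le, le_rfl⟩)
          have h3 := h2.mono_of_mem_nhdsWithin (Icc_mem_nhdsLE hx)
          rw [hkub] at h3
          exact h3
        · exact ((hlin x).hasDerivWithinAt).congr hwIci (hwIci x self_mem_Ici)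
      · rw [hw1pos x hxb]
        apply (hlin x).congr_of_eventuallyEq
        filter_upwards [Ioi_mem_nhds hxb] with z hz
        exact hwpos z hz
  -- HasDerivAt w1 (w2 x) x for all x
  have hw1w2 : ∀ x : ℝ, HasDerivAt w1 (w2 x) x := by
    intro x
    rcases lt_trichotomy x 0 with hx | hx | hx
    · rw [hw2neg x hx]
      apply (hlinc x).congr_of_eventuallyEq
      filter_upwards [Iio_mem_nhds hx] with z hz
      exact hw1neg z hz
    · subst hx
      rw [show w2 0 = k * A by rw [hw2mid 0 ⟨le_rfl, hb0.le⟩, hAdef]]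
      apply hasDerivAt_union
      · exact ((hlinc 0).hasDerivWithinAt).congr hw1Iic (hw1Iic 0 self_mem_Iic)
      · have h1 : HasDerivAt (fun z => k * u z) (k * V 0) 0 :=
          (hu 0 ⟨le_rfl, by linarith⟩).const_mul k
        have h2 : HasDerivWithinAt w1 (k * V 0) (Icc 0 b) 0 :=
          h1.hasDerivWithinAt.congr (fun z hz => hw1mid z hz) (hw1mid 0 ⟨le_rfl, hb0.le⟩)
        have h3 := h2.mono_of_mem_nhdsWithin (Icc_mem_nhdsGE hb0)
        rw [hAdef]
        exact h3
    · rcases lt_trichotomy x b with hxb | hxb | hxb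
      · rw [hw2mid x ⟨hx.le, hxb.le⟩]
        have h1 : HasDerivAt (fun z => k * u z) (k * V x) x :=
          (hu x (hbI x ⟨hx.le, hxb.le⟩)).const_mul k
        apply h1.congr_of_eventuallyEq
        filter_upwards [Ioo_mem_nhds hx hxb] with z hz
        exact hw1mid z ⟨hz.1.le, hz.2.le⟩
      · subst hxb
        rw [show w2 x = 0 by rw [hw2mid x ⟨hx.le, le_rfl⟩, hVb, mul_zero]]
        apply hasDerivAt_union
        · have h1 : HasDerivAt (fun z => k * u z) (k * V x) x :=
            (hu x (hbI x ⟨hx.le, le_rfl⟩)).const_mul k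
          have h2 : HasDerivWithinAt w1 (k * V x) (Icc 0 x) x :=
            h1.hasDerivWithinAt.congr (fun z hz => hw1mid z hz) (hw1mid x ⟨hx.le, le_rfl⟩)
          have h3 := h2.mono_of_mem_nhdsWithin (Icc_mem_nhdsLE hx)
          rw [hVb, mul_zero] at h3
          exact h3
        · exact ((hasDerivAt_const x (1:ℝ)).hasDerivWithinAt (s := Ici x)).congr
            hw1Ici (hw1Ici x self_mem_Ici)
      · rw [hw2pos x hxb]
        apply (hasDerivAt_const x (1:ℝ)).congr_of_eventuallyEq
        filter_upwards [Ioi_mem_nhds hxb] with z hz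
        exact hw1pos z hz
  -- continuity of w2
  have hVC : ∀ z ∈ Icc (0:ℝ) T, ContinuousAt V z := by
    intro z hz
    have : ContinuousAt (fun x => 2 / σ ^ 2 * (r * y x - c x * u x)) z :=
      continuousAt_const.mul ((continuousAt_const.mul (hy z hz).continuousAt).sub
        (hc.continuousAt.mul (hu z hz).continuousAt))
    simpa only [hVdef] using this
  have hw2c : Continuous w2 := by
    rw [continuous_iff_continuousAt]
    intro x
    rcases lt_trichotomy x 0 with hx | hx | hx
    · apply continuousAt_const.congr
      filter_upwards [Iio_mem_nhds hx] with z hz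
      exact (hw2neg z hz).symm
    · subst hx
      apply continuousAt_union
      · exact (continuousWithinAt_const (b := k * A)).congr hw2Iic (hw2Iic 0 self_mem_Iic)
      · have h1 : ContinuousWithinAt (fun z => k * V z) (Icc 0 b) 0 :=
          (continuousAt_const.mul (hVC 0 ⟨le_rfl, by linarith⟩)).continuousWithinAt
        have h2 : ContinuousWithinAt w2 (Icc 0 b) 0 :=
          h1.congr (fun z hz => hw2mid z hz) (hw2mid 0 ⟨le_rfl, hb0.le⟩)
        exact h2.mono_of_mem_nhdsWithin (Icc_mem_nhdsGE hb0)
    · rcases lt_trichotomy x b with hxb | hxb | hxb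
      · apply (continuousAt_const.mul (hVC x (hbI x ⟨hx.le, hxb.le⟩))).congr
        filter_upwards [Ioo_mem_nhds hx hxb] with z hz
        exact (hw2mid z ⟨hz.1.le, hz.2.le⟩).symm
      · subst hxb
        apply continuousAt_union
        · have h1 : ContinuousWithinAt (fun z => k * V z) (Icc 0 x) x :=
            (continuousAt_const.mul (hVC x (hbI x ⟨hx.le, le_rfl⟩))).continuousWithinAt
          have h2 : ContinuousWithinAt w2 (Icc 0 x) x :=
            h1.congr (fun z hz => hw2mid z hz) (hw2mid x ⟨hx.le, le_rfl⟩)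
          exact h2.mono_of_mem_nhdsWithin (Icc_mem_nhdsLE hx)
        · have h0 : w2 x = 0 := by rw [hw2mid x ⟨hx.le, le_rfl⟩, hVb, mul_zero]
          exact (continuousWithinAt_const (b := (0:ℝ))).congr hw2Ici (hw2Ici x self_mem_Ici)
      · apply continuousAt_const.congr
        filter_upwards [Ioi_mem_nhds hxb] with z hz
        exact (hw2pos z hz).symm
  have hderiv1 : deriv w = w1 := funext fun x => (hww1 x).deriv
  have hderiv2 : deriv (deriv w) = w2 := by
    rw [hderiv1]; exact funext fun x => (hw1w2 x).deriv
  have hCD : ContDiff ℝ 2 w := by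
    rw [show (2 : WithTop ℕ∞) = 1 + 1 from by norm_num, contDiff_succ_iff_deriv]
    refine ⟨fun x => (hww1 x).differentiableAt, by simp, ?_⟩
    rw [hderiv1, contDiff_one_iff_deriv]
    refine ⟨fun x => (hw1w2 x).differentiableAt, ?_⟩
    rw [show deriv w1 = w2 from funext fun x => (hw1w2 x).deriv]
    exact hw2c
  refine ⟨b, ⟨hb.1, hb.2⟩, w, hCD, ?_, ?_, ?_, ?_⟩
  · intro x hx
    rw [hderiv2, hderiv1, hwmid x hx, hw1mid x hx, hw2mid x hx]
    simp only [hVdef]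
    field_simp
    ring
  · rw [hderiv1, hw1mid b ⟨hb0.le, le_rfl⟩, hkub]
  · rw [hderiv2, hw2mid b ⟨hb0.le, le_rfl⟩, hVb, mul_zero]
  · rw [hwmid 0 ⟨le_rfl, hb0.le⟩, y0, mul_zero]

end
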